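/- Let Γ = (γ_{ij})_{i,j=1}^N be a gain matrix with each γ_{ij} ∈ K∞ ∪ {0}, assume Γ is irreducible, let μ_1, …, μ_N be monotone aggregation functions, and let Γμ(s)_i = μ_i(γ_{i1}(s_1), …, γ_{iN}(s_N)) be the induced gain operator. Let κ_0 > 0, κ_Γ > κ_h > 0, δ > 0, let φ(v) = Γμ(v)·(1 + min{0, (κ_Γ − 2‖v‖)/(‖v‖ + κ_0)}) + max{0, κ_h − 2‖v‖}·e, and let c ∈ ℝ^N with c ≫ 0. Let y^1, …, y^{N+1} ∈ ℝ^N_+ × {0, 1}, y^j = (v^j, t_j), be the vertices of an N-simplex of the two-layered triangulation K̃_1(δ): y^{j+1} = y^j + d^j for j = 1, …, N, where the increments d^j are pairwise distinct elements of {δe_1, …, δe_N, e_{N+1}} (e_i the i-th standard basis vector of ℝ^{N+1}). Assume the simplex lies on the boundary of the positive orthant, i.e., there is an index i* with v^j_{i*} = 0 for all j = 1, …, N+1, and assume ‖v^{N+1}‖ < κ_0 + κ_Γ. Define labels l(y^j) = (1 − t_j)c + t_j φ(v^j) − v^j and the (N+1)×(N+1) labeling matrix L whose j-th column is (1, l(y^j)^T)^T.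 Then the simplex is not complete: there is no matrix W with L·W = I_{N+1} such that every row of W is lexicographically positive. -/

import Mathlib

/-- A function `α : ℝ_+ → ℝ_+` is of class `K∞`: continuous, strictly
increasing, unbounded and `α(0) = 0` (stated on `[0,∞)`). -/
def ClassKInf (α : ℝ → ℝ) : Prop :=
  ContinuousOn α (Set.Ici 0) ∧ StrictMonoOn α (Set.Ici 0) ∧ α 0 = 0 ∧
    (∀ x, 0 ≤ x → 0 ≤ α x) ∧ (∀ M : ℝ, ∃ x, 0 ≤ x ∧ M < α x)

/-- A monotone aggregation function `μ : ℝ^N_+ → ℝ_+`: continuous, positive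
(`μ(s) = 0` iff `s = 0`), strictly increasing with respect to `≪`, and
unbounded as `‖s‖ → ∞`. -/
def IsMAF {n : ℕ} (μ : EuclideanSpace ℝ (Fin n) → ℝ) : Prop :=
  ContinuousOn μ {s : EuclideanSpace ℝ (Fin n) | ∀ i, 0 ≤ s i} ∧
    (∀ s : EuclideanSpace ℝ (Fin n), (∀ i, 0 ≤ s i) → 0 ≤ μ s) ∧
    (∀ s : EuclideanSpace ℝ (Fin n), (∀ i, 0 ≤ s i) → (μ s = 0 ↔ s = 0)) ∧
    (∀ s t : EuclideanSpace ℝ (Fin n), (∀ i, 0 ≤ s i) → (∀ i, 0 ≤ t i) →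
      (∀ i, s i < t i) → μ s < μ t) ∧
    (∀ M : ℝ, ∃ C : ℝ, ∀ s : EuclideanSpace ℝ (Fin n), (∀ i, 0 ≤ s i) →
      C ≤ ‖s‖ → M ≤ μ s)

/-- A row vector is lexicographically positive if its first nonzero entry is
positive. -/
def LexPosRow {n : ℕ} (w : Fin n → ℝ) : Prop :=
  ∃ j, 0 < w j ∧ ∀ i, i < j → w i = 0

/-- Theorem (no complete simplices on the boundary of the positive orthant):
let `Γ` be an irreducible gain matrix with entries in `K∞ ∪ {0}`, `μ_i`
monotone aggregation functions, `Γμ` the induced gain operator and `φ` as in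
the paper, `c ≫ 0`.  If the vertices `y^j = (v^j, t_j)` of an `N`-simplex of
the two-layered triangulation `K̃₁(δ)` lie on the boundary of the positive
orthant (some coordinate `i*` vanishes identically) and
`‖v^{N+1}‖ < κ_0 + κ_Γ`, then the simplex is not complete. -/
theorem no_complete_simplex_on_boundary
    {N : ℕ} (hN : 0 < N)
    (γ : Fin N → Fin N → ℝ → ℝ)
    (hγ : ∀ i j, ClassKInf (γ i j) ∨ ∀ x, γ i j x = 0)
    (hirr : ∀ i j : Fin N,
      Relation.ReflTransGen (fun a b => ClassKInf (γ b a)) i j)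
    (μ : Fin N → EuclideanSpace ℝ (Fin N) → ℝ) (hμ : ∀ i, IsMAF (μ i))
    (Γμ : EuclideanSpace ℝ (Fin N) → EuclideanSpace ℝ (Fin N))
    (hΓμ : ∀ (s : EuclideanSpace ℝ (Fin N)) (i : Fin N),
      Γμ s i = μ i (WithLp.toLp 2 (fun j => γ i j (s j))))
    (κ₀ κΓ κh δ : ℝ) (hκ₀ : 0 < κ₀) (hκh : 0 < κh) (hκΓ : κh < κΓ) (hδ : 0 < δ)
    (φ : EuclideanSpace ℝ (Fin N) → EuclideanSpace ℝ (Fin N))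
    (hφ : ∀ (v : EuclideanSpace ℝ (Fin N)) (i : Fin N),
      φ v i = Γμ v i * (1 + min 0 ((κΓ - 2 * ‖v‖) / (‖v‖ + κ₀)))
        + max 0 (κh - 2 * ‖v‖))
    (c : EuclideanSpace ℝ (Fin N)) (hc : ∀ i, 0 < c i)
    -- the vertices `y^j = (v^j, t_j)` of an `N`-simplex of `K̃₁(δ)`
    (v : Fin (N + 1) → EuclideanSpace ℝ (Fin N)) (t : Fin (N + 1) → ℝ)
    (hvnonneg : ∀ j i, 0 ≤ v j i) (ht01 : ∀ j, t j = 0 ∨ t j = 1)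
    (d : Fin N → EuclideanSpace ℝ (Fin N) × ℝ)
    (hdinj : Function.Injective d)
    (hdmem : ∀ j : Fin N,
      (∃ i : Fin N, d j = (δ • EuclideanSpace.single i (1 : ℝ), (0 : ℝ))) ∨
        d j = (0, 1))
    (hstep : ∀ j : Fin N,
      v j.succ = v j.castSucc + (d j).1 ∧ t j.succ = t j.castSucc + (d j).2)
    -- the simplex lies on the boundary of the positive orthant
    (istar : Fin N) (hbd : ∀ j, v j istar = 0)
    -- and not too far out
    (hnorm : ‖v (Fin.last N)‖ < κ₀ + κΓ)
    -- the labels and the labeling matrix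
    (lab : Fin (N + 1) → EuclideanSpace ℝ (Fin N))
    (hlab : ∀ j, lab j = (1 - t j) • c + t j • φ (v j) - v j)
    (L : Matrix (Fin (N + 1)) (Fin (N + 1)) ℝ)
    (hLtop : ∀ j, L 0 j = 1)
    (hLrow : ∀ (i : Fin N) (j : Fin (N + 1)), L i.succ j = lab j i) :
    ¬ ∃ W : Matrix (Fin (N + 1)) (Fin (N + 1)) ℝ,
        L * W = 1 ∧ ∀ i, LexPosRow (W i) := by
  classical
  rintro ⟨W, hLW, hlex⟩
  set w : Fin (N + 1) → ℝ := fun j => W j 0 with hw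
  -- nonnegativity of the first column of W
  have hwnn : ∀ j, 0 ≤ w j := by
    intro j
    obtain ⟨k, hk, hk0⟩ := hlex j
    rcases eq_or_lt_of_le (Fin.zero_le k) with h | h
    · simpa [hw, ← h] using hk.le
    · simp [hw, hk0 0 h]
  have hsum1 : ∑ j, w j = 1 := by
    have h := congrFun (congrFun hLW 0) 0
    simpa [Matrix.mul_apply, Matrix.one_apply, hLtop, hw] using h
  have hsum0 : ∀ i : Fin N, ∑ j, lab j i * w j = 0 := by
    intro i
    have h := congrFun (congrFun hLW i.succ) 0
    simpa [Matrix.mul_apply, Matrix.one_apply, Fin.succ_ne_zero, hLrow, hw] using h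
  -- coordinates of the labels
  have hlabi : ∀ j i, lab j i = (1 - t j) * c i + t j * φ (v j) i - v j i := by
    intro j i
    rw [hlab]
    simp [smul_eq_mul]
  -- monotonicity of v in j, coordinatewise
  have hmono : ∀ i : Fin N, Monotone fun j => v j i := by
    intro i
    refine Fin.monotone_iff_le_succ.mpr ?_
    intro j
    have h1 := (hstep j).1
    have h2 : v j.succ i = v j.castSucc i + (d j).1 i := by rw [h1]; rfl
    have h3 : 0 ≤ (d j).1 i := by
      rcases hdmem j with ⟨k, hk⟩ | hk
      · rw [hk]
        simp only [PiLp.smul_apply, EuclideanSpace.single_apply, smul_eq_mul]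
        positivity
      · rw [hk]
        simp
    simp only [h2]
    linarith
  -- norm bound for every vertex
  have hvlt : ∀ j, ‖v j‖ < κ₀ + κΓ := by
    intro j
    refine lt_of_le_of_lt ?_ hnorm
    rw [EuclideanSpace.norm_eq, EuclideanSpace.norm_eq]
    apply Real.sqrt_le_sqrt
    apply Finset.sum_le_sum
    intro i _
    have h1 : v j i ≤ v (Fin.last N) i := hmono i (Fin.le_last j)
    have h2 : 0 ≤ v j i := hvnonneg j i
    rw [Real.norm_eq_abs, Real.norm_eq_abs, abs_of_nonneg h2, abs_of_nonneg (h2.trans h1)]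
    exact pow_le_pow_left₀ h2 h1 2
  -- nonnegativity facts
  have hγnn : ∀ i k x, 0 ≤ x → 0 ≤ γ i k x := by
    intro i k x hx
    rcases hγ i k with h | h
    · exact h.2.2.2.1 x hx
    · simp [h]
  have hΓnn : ∀ (x : EuclideanSpace ℝ (Fin N)), (∀ i, 0 ≤ x i) → ∀ i, 0 ≤ Γμ x i := by
    intro x hx i
    rw [hΓμ]
    exact (hμ i).2.1 _ fun k => hγnn i k _ (hx k)
  have hfacpos : ∀ (x : EuclideanSpace ℝ (Fin N)), ‖x‖ < κ₀ + κΓ →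
      0 < 1 + min 0 ((κΓ - 2 * ‖x‖) / (‖x‖ + κ₀)) := by
    intro x hx
    have hn : (0 : ℝ) ≤ ‖x‖ := norm_nonneg x
    have hden : 0 < ‖x‖ + κ₀ := by positivity
    rcases le_or_gt 0 ((κΓ - 2 * ‖x‖) / (‖x‖ + κ₀)) with h | h
    · rw [min_eq_left h]; norm_num
    · rw [min_eq_right h.le]
      have heq : 1 + (κΓ - 2 * ‖x‖) / (‖x‖ + κ₀) = (κ₀ + κΓ - ‖x‖) / (‖x‖ + κ₀) := by
        field_simp
        ring
      rw [heq]
      apply div_pos (by linarith) hden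
  have hφnn : ∀ (x : EuclideanSpace ℝ (Fin N)), (∀ i, 0 ≤ x i) → ‖x‖ < κ₀ + κΓ →
      ∀ i, 0 ≤ φ x i := by
    intro x hx hxn i
    rw [hφ]
    exact add_nonneg (mul_nonneg (hΓnn x hx i) (hfacpos x hxn).le) (le_max_left _ _)
  have hφzero : ∀ (x : EuclideanSpace ℝ (Fin N)), (∀ i, 0 ≤ x i) → ‖x‖ < κ₀ + κΓ →
      ∀ i, φ x i = 0 → Γμ x i = 0 ∧ κh ≤ 2 * ‖x‖ := by
    intro x hx hxn i h0
    rw [hφ] at h0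
    have hA := hΓnn x hx i
    have hf := hfacpos x hxn
    have hAf : 0 ≤ Γμ x i * (1 + min 0 ((κΓ - 2 * ‖x‖) / (‖x‖ + κ₀))) :=
      mul_nonneg hA hf.le
    have hB : 0 ≤ max 0 (κh - 2 * ‖x‖) := le_max_left _ _
    have h1 : Γμ x i * (1 + min 0 ((κΓ - 2 * ‖x‖) / (‖x‖ + κ₀))) = 0 := by linarith
    have h2 : max 0 (κh - 2 * ‖x‖) = 0 := by linarith
    constructor
    · rcases mul_eq_zero.mp h1 with h | h
      · exact h
      · exact absurd h hf.ne'
    · have := max_eq_left_iff.mp h2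
      linarith
  -- there is a positive entry in w
  have hex : ∃ j, 0 < w j := by
    by_contra h
    push_neg at h
    have hz : ∀ j, w j = 0 := fun j => le_antisymm (h j) (hwnn j)
    rw [Finset.sum_congr rfl fun j _ => hz j] at hsum1
    simp at hsum1
  -- the maximal vertex in the support of w
  set S : Finset (Fin (N + 1)) := Finset.univ.filter (fun j => 0 < w j) with hSdef
  have hSne : S.Nonempty := by
    obtain ⟨j, hj⟩ := hex
    exact ⟨j, by simp [hSdef, hj]⟩
  set jm : Fin (N + 1) := S.max' hSne with hjmdef
  have hjm : 0 < w jm := (Finset.mem_filter.mp (S.max'_mem hSne)).2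
  have hle : ∀ j, 0 < w j → j ≤ jm := by
    intro j hj
    exact S.le_max' j (by simp [hSdef, hj])
  -- key vanishing lemma
  have hkey : ∀ i : Fin N, v jm i = 0 → lab jm i = 0 := by
    intro i hi
    have hterm : ∀ j : Fin (N + 1), 0 ≤ lab j i * w j := by
      intro j
      rcases (hwnn j).eq_or_lt with h | h
      · simp [← h]
      · have hji : v j i = 0 := by
          have h1 := hmono i (hle j h)
          simp only at h1
          have := hvnonneg j i
          rw [hi] at h1
          linarith
        have hl : 0 ≤ lab j i := by
          rw [hlabi j i, hji]
          rcases ht01 j with h0 | h1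
          · rw [h0]
            simpa using (hc i).le
          · rw [h1]
            simpa using hφnn (v j) (hvnonneg j) (hvlt j) i
        exact mul_nonneg hl h.le
    have h0 := (Finset.sum_eq_zero_iff_of_nonneg fun j _ => hterm j).mp (hsum0 i) jm
      (Finset.mem_univ jm)
    have := mul_eq_zero.mp h0
    rcases this with h | h
    · exact h
    · exact absurd h hjm.ne'
  -- at istar, deduce t jm = 1 and φ (v jm) istar = 0
  have h_istar := hkey istar (hbd jm)
  have htjm : t jm = 1 := by
    rcases ht01 jm with h0 | h1
    · rw [hlabi, hbd jm, h0] at h_istar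
      simp at h_istar
      exact absurd h_istar (hc istar).ne'
    · exact h1
  have hφist : φ (v jm) istar = 0 := by
    rw [hlabi, hbd jm, htjm] at h_istar
    linarith
  obtain ⟨-, hκ⟩ := hφzero (v jm) (hvnonneg jm) (hvlt jm) istar hφist
  -- v jm has a positive coordinate
  have hvex : ∃ k, 0 < v jm k := by
    by_contra h
    push_neg at h
    have hz : v jm = 0 := by
      ext k
      simpa using le_antisymm (h k) (hvnonneg jm k)
    rw [hz, norm_zero] at hκ
    linarith
  obtain ⟨k₀, hk₀⟩ := hvex
  -- no K∞ edge from a positive coordinate to a zero coordinate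
  have hedge : ∀ i k : Fin N, v jm i = 0 → 0 < v jm k → ¬ ClassKInf (γ i k) := by
    intro i k hi hk hcl
    have hli := hkey i hi
    have hφi : φ (v jm) i = 0 := by
      rw [hlabi, hi, htjm] at hli
      linarith
    obtain ⟨hΓi, -⟩ := hφzero (v jm) (hvnonneg jm) (hvlt jm) i hφi
    rw [hΓμ] at hΓi
    have hs0 : WithLp.toLp 2 (fun j => γ i j (v jm j)) = (0 : EuclideanSpace ℝ (Fin N)) :=
      ((hμ i).2.2.1 _ fun k' => hγnn i k' _ (hvnonneg jm k')).mp hΓi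
    have hz : γ i k (v jm k) = 0 := by
      simpa using congrArg (fun x : EuclideanSpace ℝ (Fin N) => x k) hs0
    have hlt : γ i k 0 < γ i k (v jm k) :=
      hcl.2.1 (Set.mem_Ici.mpr le_rfl) (Set.mem_Ici.mpr hk.le) hk
    rw [hcl.2.2.1, hz] at hlt
    exact lt_irrefl 0 hlt
  -- irreducibility: propagate positivity along the path from k₀ to istar
  have hprop : ∀ b : Fin N,
      Relation.ReflTransGen (fun a b => ClassKInf (γ b a)) k₀ b → 0 < v jm b := by
    intro b hb
    induction hb with
    | refl => exact hk₀
    | tail hab step ih =>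
        by_contra h
        push_neg at h
        have hz : v jm _ = 0 := le_antisymm h (hvnonneg jm _)
        exact hedge _ _ hz ih step
  have hfin := hprop istar (hirr k₀ istar)
  rw [hbd jm] at hfin
  exact lt_irrefl 0 hfin
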